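/- In an implicative aBE algebra, for all x, y, z: x → y = (z → x) → (x → y). -/
import Mathlib


class ImplicativeABE (X : Type*) where
  imp : X → X → X
  one : X
  one_imp : ∀ x, imp one x = x
  imp_one : ∀ x, imp x one = one
  imp_self : ∀ x, imp x x = one
  exch : ∀ x y z, imp x (imp y z) = imp y (imp x z)
  antisymm : ∀ x y, imp x y = one → imp y x = one → x = y
  implicative : ∀ x y, imp (imp x y) x = x

infixr:60 " ⮕ " => ImplicativeABE.imp
notation "𝟙" => ImplicativeABE.one

theorem stmt2 {X : Type*} [ImplicativeABE X] (x y z : X) :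
    x ⮕ y = (z ⮕ x) ⮕ (x ⮕ y) := by
  have h1 : z ⮕ x = (x ⮕ y) ⮕ (z ⮕ x) := by
    calc z ⮕ x = z ⮕ ((x ⮕ y) ⮕ x) := by rw [ImplicativeABE.implicative]
    _ = (x ⮕ y) ⮕ (z ⮕ x) := ImplicativeABE.exch z (x ⮕ y) x
  rw [h1, ImplicativeABE.implicative]
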